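/- Let 0 ≤ h ∈ L¹(a,b) with h ≢ 0 and let v ∈ C¹([a,b]) be the solution of −(φ(v'))' = h in (a,b), v(a) = v(b) = 0. Then for all x ∈ [a,b]: θ̲_h · min{ ∫_a^{θ̄_h} φ⁻¹(∫_y^{θ̄_h} h(s) ds) dy , ∫_{θ̄_h}^b φ⁻¹(∫_{θ̄_h}^y h(s) ds) dy } · δ_Ω(x) ≤ v(x) ≤ φ⁻¹(∫_a^b h(s) ds) · δ_Ω(x). -/

import Mathlib

open MeasureTheory Set Filter

/-- `φ` is an odd increasing homeomorphism of `ℝ`. -/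
def OddIncHomeo (φ : ℝ → ℝ) : Prop :=
  StrictMono φ ∧ Continuous φ ∧ Function.Surjective φ ∧ ∀ x, φ (-x) = -φ x

/-- `v` is `C¹` on `[a,b]` with derivative `v'`. -/
def C1On (v v' : ℝ → ℝ) (a b : ℝ) : Prop :=
  ContinuousOn v (Icc a b) ∧ ContinuousOn v' (Icc a b) ∧
  ∀ x ∈ Icc a b, HasDerivWithinAt v (v' x) (Icc a b) x

/-- `v` (with derivative `v'`) is a solution of `-(φ(v'))' = h` in `(a,b)`,
`v(a) = v(b) = 0`. -/
def IsSolutionH (φ h : ℝ → ℝ) (a b : ℝ) (v v' : ℝ → ℝ) : Prop :=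
  C1On v v' a b ∧ v a = 0 ∧ v b = 0 ∧
  ∀ x ∈ Icc a b, φ (v' x) = φ (v' a) - ∫ s in a..x, h s

/-- `α_h = sup 𝒜_h` where `𝒜_h = {x ∈ (a,b) : h = 0 a.e. on (a,x)}`, with
`α_h = a` if `𝒜_h = ∅`. -/
noncomputable def alphaH (h : ℝ → ℝ) (a b : ℝ) : ℝ :=
  sSup ({x | x ∈ Ioo a b ∧ ∀ᵐ y ∂(volume : Measure ℝ), y ∈ Ioo a x → h y = 0} ∪ {a})

/-- `β_h = inf ℬ_h` where `ℬ_h = {x ∈ (a,b) : h = 0 a.e. on (x,b)}`, with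
`β_h = b` if `ℬ_h = ∅`. -/
noncomputable def betaH (h : ℝ → ℝ) (a b : ℝ) : ℝ :=
  sInf ({x | x ∈ Ioo a b ∧ ∀ᵐ y ∂(volume : Measure ℝ), y ∈ Ioo x b → h y = 0} ∪ {b})

/-- `θ̲_h = min {1/(β_h - a), 1/(b - α_h)}`. -/
noncomputable def thetaLow (h : ℝ → ℝ) (a b : ℝ) : ℝ :=
  min (1 / (betaH h a b - a)) (1 / (b - alphaH h a b))

/-- `θ̄_h = (α_h + β_h)/2`. -/
noncomputable def thetaBar (h : ℝ → ℝ) (a b : ℝ) : ℝ :=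
  (alphaH h a b + betaH h a b) / 2

/-- `δ_Ω(x) = min (x - a, b - x)`. -/
noncomputable def deltaOmega (a b x : ℝ) : ℝ := min (x - a) (b - x)

lemma aux_ae_alpha (h : ℝ → ℝ) (a b : ℝ) (hab : a < b) :
    ∀ᵐ y ∂(volume : Measure ℝ), y ∈ Ioo a (alphaH h a b) → h y = 0 := by
  set S := ({x | x ∈ Ioo a b ∧ ∀ᵐ y ∂(volume : Measure ℝ), y ∈ Ioo a x → h y = 0} ∪ {a}) with hS
  have hα : alphaH h a b = sSup S := rfl
  have hne : S.Nonempty := ⟨a, Or.inr rfl⟩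
  have hprop : ∀ x ∈ S, ∀ᵐ y ∂(volume : Measure ℝ), y ∈ Ioo a x → h y = 0 := by
    intro x hx
    rcases hx with hx | hx
    · exact hx.2
    · rw [mem_singleton_iff] at hx
      subst hx
      filter_upwards with y hy
      exact absurd hy (by simp)
  have hchoice : ∀ n : ℕ, ∃ x ∈ S, alphaH h a b - 1/(n+1) < x := by
    intro n
    apply exists_lt_of_lt_csSup hne
    rw [← hα]
    have : (0:ℝ) < 1/((n:ℝ)+1) := by positivity
    linarith
  choose f hfS hflt using hchoice
  have hae : ∀ᵐ y ∂(volume : Measure ℝ), ∀ n : ℕ, y ∈ Ioo a (f n) → h y = 0 :=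
    ae_all_iff.2 fun n => hprop _ (hfS n)
  filter_upwards [hae] with y hy hyI
  obtain ⟨n, hn⟩ := exists_nat_one_div_lt (sub_pos.2 hyI.2)
  exact hy n ⟨hyI.1, by have := hflt n; linarith⟩

lemma aux_ae_beta (h : ℝ → ℝ) (a b : ℝ) (hab : a < b) :
    ∀ᵐ y ∂(volume : Measure ℝ), y ∈ Ioo (betaH h a b) b → h y = 0 := by
  set T := ({x | x ∈ Ioo a b ∧ ∀ᵐ y ∂(volume : Measure ℝ), y ∈ Ioo x b → h y = 0} ∪ {b}) with hT
  have hβ : betaH h a b = sInf T := rfl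
  have hne : T.Nonempty := ⟨b, Or.inr rfl⟩
  have hprop : ∀ x ∈ T, ∀ᵐ y ∂(volume : Measure ℝ), y ∈ Ioo x b → h y = 0 := by
    intro x hx
    rcases hx with hx | hx
    · exact hx.2
    · rw [mem_singleton_iff] at hx
      subst hx
      filter_upwards with y hy
      exact absurd hy (by simp)
  have hchoice : ∀ n : ℕ, ∃ x ∈ T, x < betaH h a b + 1/(n+1) := by
    intro n
    apply exists_lt_of_csInf_lt hne
    rw [← hβ]
    have : (0:ℝ) < 1/((n:ℝ)+1) := by positivity
    linarith
  choose f hfT hflt using hchoice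
  have hae : ∀ᵐ y ∂(volume : Measure ℝ), ∀ n : ℕ, y ∈ Ioo (f n) b → h y = 0 :=
    ae_all_iff.2 fun n => hprop _ (hfT n)
  filter_upwards [hae] with y hy hyI
  obtain ⟨n, hn⟩ := exists_nat_one_div_lt (sub_pos.2 hyI.1)
  exact hy n ⟨by have := hflt n; linarith, hyI.2⟩

lemma aux_alpha_beta (h : ℝ → ℝ) (a b : ℝ) (hab : a < b)
    (hhne : ¬ (∀ᵐ x ∂(volume : Measure ℝ), x ∈ Ioo a b → h x = 0)) :
    a ≤ alphaH h a b ∧ betaH h a b ≤ b ∧ alphaH h a b < betaH h a b := by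
  have hbddS : BddAbove ({x | x ∈ Ioo a b ∧ ∀ᵐ y ∂(volume : Measure ℝ), y ∈ Ioo a x → h y = 0} ∪ {a}) := by
    refine ⟨b, fun x hx => ?_⟩
    rcases hx with hx | hx
    · exact hx.1.2.le
    · rw [mem_singleton_iff] at hx; simp [hx, hab.le]
  have hbddT : BddBelow ({x | x ∈ Ioo a b ∧ ∀ᵐ y ∂(volume : Measure ℝ), y ∈ Ioo x b → h y = 0} ∪ {b}) := by
    refine ⟨a, fun x hx => ?_⟩
    rcases hx with hx | hx
    · exact hx.1.1.le
    · rw [mem_singleton_iff] at hx; simp [hx, hab.le]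
  have haα : a ≤ alphaH h a b := le_csSup hbddS (Or.inr rfl)
  have hβb : betaH h a b ≤ b := csInf_le hbddT (Or.inr rfl)
  refine ⟨haα, hβb, ?_⟩
  by_contra hc
  push_neg at hc
  have hane : ∀ᵐ z : ℝ, z ≠ alphaH h a b := by
    exact compl_mem_ae_iff.2 (measure_singleton (alphaH h a b) (μ := volume))
  apply hhne
  filter_upwards [aux_ae_alpha h a b hab, aux_ae_beta h a b hab, hane] with z h1 h2 h3 hz
  by_cases hza : z < alphaH h a b
  · exact h1 ⟨hz.1, hza⟩
  · push_neg at hza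
    have hβz : betaH h a b < z := by
      rcases eq_or_lt_of_le (hc.trans hza) with he | hl
      · exact absurd (le_antisymm hza (he ▸ hc)) (Ne.symm h3)
      · exact hl
    exact h2 ⟨hβz, hz.2⟩

theorem pointwise_bounds_for_solution
    (a b : ℝ) (hab : a < b) (φ : ℝ → ℝ) (hφ : OddIncHomeo φ)
    (h : ℝ → ℝ) (hh : IntegrableOn h (Icc a b))
    (hh0 : ∀ᵐ x ∂(volume : Measure ℝ), x ∈ Ioo a b → 0 ≤ h x)
    (hhne : ¬ (∀ᵐ x ∂(volume : Measure ℝ), x ∈ Ioo a b → h x = 0))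
    (v v' : ℝ → ℝ) (hv : IsSolutionH φ h a b v v') :
    ∀ x ∈ Icc a b,
      thetaLow h a b *
        min (∫ y in a..(thetaBar h a b), Function.invFun φ (∫ s in y..(thetaBar h a b), h s))
            (∫ y in (thetaBar h a b)..b, Function.invFun φ (∫ s in (thetaBar h a b)..y, h s))
        * deltaOmega a b x ≤ v x ∧
      v x ≤ Function.invFun φ (∫ s in a..b, h s) * deltaOmega a b x := by
  obtain ⟨hmono, hcont, hsurj, hodd⟩ := hφ
  obtain ⟨⟨hcv, hcv', hd⟩, hva, hvb, heq⟩ := hv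
  set ψ := Function.invFun φ with hψdef
  have hφψ : ∀ y, φ (ψ y) = y := fun y => Function.invFun_eq (hsurj y)
  have hψφ : ∀ x, ψ (φ x) = x := fun x => hmono.injective (hφψ (φ x))
  have hψmono : Monotone ψ := fun x y hxy => hmono.le_iff_le.1 (by rw [hφψ, hφψ]; exact hxy)
  have hφ0 : φ 0 = 0 := by have := hodd 0; simp only [neg_zero] at this; linarith
  have hψ0 : ψ 0 = 0 := hmono.injective (by rw [hφψ, hφ0])
  have hψcont : Continuous ψ := by
    have he : ψ = ⇑(StrictMono.orderIsoOfSurjective φ hmono hsurj).symm := by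
      funext y
      exact hmono.injective ((hφψ y).trans
        (StrictMono.orderIsoOfSurjective_self_symm_apply φ hmono hsurj y).symm)
    rw [he]
    exact OrderIso.continuous _
  -- interval integrability of h
  have hIcc : ∀ {x y : ℝ}, x ∈ Icc a b → y ∈ Icc a b → IntervalIntegrable h volume x y :=
    fun hx hy => (hh.mono_set (uIcc_subset_Icc hx hy)).intervalIntegrable
  have haI : a ∈ Icc a b := left_mem_Icc.2 hab.le
  have hbI : b ∈ Icc a b := right_mem_Icc.2 hab.le
  -- nonnegativity of subinterval integrals
  have hHnn : ∀ x y : ℝ, x ∈ Icc a b → y ∈ Icc a b → x ≤ y → 0 ≤ ∫ s in x..y, h s := by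
    intro x y hx hy hxy
    apply intervalIntegral.integral_nonneg_of_ae_restrict hxy
    have hsub : Icc x y ⊆ Icc a b := Icc_subset_Icc hx.1 hy.2
    have h1 : ∀ᵐ z ∂(volume.restrict (Icc x y)), z ∈ Ioo a b → 0 ≤ h z := ae_restrict_of_ae hh0
    have h2 : ∀ᵐ z ∂(volume.restrict (Icc x y)), z ∈ Icc x y := ae_restrict_mem measurableSet_Icc
    have h3 : ∀ᵐ z ∂(volume.restrict (Icc x y)), z ≠ a ∧ z ≠ b := by
      apply ae_restrict_of_ae
      have h3a : ∀ᵐ z : ℝ, z ≠ a := by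
        exact compl_mem_ae_iff.2 (measure_singleton a (μ := volume))
      have h3b : ∀ᵐ z : ℝ, z ≠ b := by
        exact compl_mem_ae_iff.2 (measure_singleton b (μ := volume))
      filter_upwards [h3a, h3b] with z hza hzb using ⟨hza, hzb⟩
    filter_upwards [h1, h2, h3] with z hz1 hz2 hz3
    exact hz1 ⟨(hsub hz2).1.lt_of_ne (Ne.symm hz3.1), (hsub hz2).2.lt_of_ne hz3.2⟩
  have hadd : ∀ x y z : ℝ, x ∈ Icc a b → y ∈ Icc a b → z ∈ Icc a b →
      (∫ s in x..y, h s) + ∫ s in y..z, h s = ∫ s in x..z, h s :=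
    fun x y z hx hy hz => intervalIntegral.integral_add_adjacent_intervals (hIcc hx hy) (hIcc hy hz)
  -- derivative facts
  have hdAt : ∀ x ∈ Ioo a b, HasDerivAt v (v' x) x := fun x hx =>
    (hd x (Ioo_subset_Icc_self hx)).hasDerivAt (Icc_mem_nhds hx.1 hx.2)
  have hv'int : ∀ {x y : ℝ}, x ∈ Icc a b → y ∈ Icc a b → IntervalIntegrable v' volume x y :=
    fun hx hy => (hcv'.mono (uIcc_subset_Icc hx hy)).intervalIntegrable
  have hFTC : ∀ x y : ℝ, x ∈ Icc a b → y ∈ Icc a b → x ≤ y →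
      ∫ t in x..y, v' t = v y - v x := by
    intro x y hx hy hxy
    exact intervalIntegral.integral_eq_sub_of_hasDeriv_right_of_le hxy
      (hcv.mono (Icc_subset_Icc hx.1 hy.2))
      (fun z hz => (hdAt z ⟨lt_of_le_of_lt hx.1 hz.1, lt_of_lt_of_le hz.2 hy.2⟩).hasDerivWithinAt)
      (hv'int hx hy)
  -- v' is decreasing
  have hv'dec : ∀ x y : ℝ, x ∈ Icc a b → y ∈ Icc a b → x ≤ y → v' y ≤ v' x := by
    intro x y hx hy hxy
    apply hmono.le_iff_le.1
    rw [heq x hx, heq y hy]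
    have h1 := hHnn x y hx hy hxy
    have h2 := hadd a x y haI hx hy
    linarith
  -- Rolle
  obtain ⟨c, hcmem, hc0⟩ := exists_hasDerivAt_eq_zero hab hcv (hva.trans hvb.symm) hdAt
  have hcIcc : c ∈ Icc a b := Ioo_subset_Icc_self hcmem
  have hφva : φ (v' a) = ∫ s in a..c, h s := by
    have h1 := heq c hcIcc
    rw [hc0, hφ0] at h1
    linarith
  have hφva0 : 0 ≤ φ (v' a) := hφva ▸ hHnn a c haI hcIcc hcIcc.1
  have hφvab : φ (v' a) ≤ ∫ s in a..b, h s := by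
    rw [hφva]
    have h1 := hHnn c b hcIcc hbI hcIcc.2
    have h2 := hadd a c b haI hcIcc hbI
    linarith
  -- upper bound constant
  have hHb0 : 0 ≤ ∫ s in a..b, h s := hHnn a b haI hbI hab.le
  have hK0 : 0 ≤ ψ (∫ s in a..b, h s) := by rw [← hψ0]; exact hψmono hHb0
  have hvaK : v' a ≤ ψ (∫ s in a..b, h s) := by
    rw [← hψφ (v' a)]; exact hψmono hφvab
  have hvbK : -v' b ≤ ψ (∫ s in a..b, h s) := by
    have h1 := heq b hbI
    have h2 : -φ (v' b) ≤ ∫ s in a..b, h s := by linarith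
    calc -v' b = ψ (φ (-v' b)) := (hψφ _).symm
      _ = ψ (-φ (v' b)) := by rw [hodd]
      _ ≤ ψ (∫ s in a..b, h s) := hψmono h2
  -- alpha/beta facts
  obtain ⟨haα, hβb, hαβ⟩ := aux_alpha_beta h a b hab hhne
  set m := thetaBar h a b with hmdef
  have hmeq : m = (alphaH h a b + betaH h a b) / 2 := rfl
  clear_value m
  have ham : a < m := by rw [hmeq]; linarith
  have hmb : m < b := by rw [hmeq]; linarith
  have hmI : m ∈ Icc a b := ⟨ham.le, hmb.le⟩
  have hθ1 : thetaLow h a b ≤ 1 / (betaH h a b - a) := min_le_left _ _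
  have hθ2 : thetaLow h a b ≤ 1 / (b - alphaH h a b) := min_le_right _ _
  have hθnn : 0 ≤ thetaLow h a b := le_min (div_nonneg zero_le_one (by linarith)) (div_nonneg zero_le_one (by linarith))
  have hθma : thetaLow h a b * (m - a) ≤ 1 := by
    have hp : (0:ℝ) < betaH h a b - a := by linarith
    rw [le_div_iff₀ hp] at hθ1
    have hma : m - a ≤ betaH h a b - a := by rw [hmeq]; linarith
    linarith [mul_le_mul_of_nonneg_left hma hθnn]
  have hθbm : thetaLow h a b * (b - m) ≤ 1 := by
    have hp : (0:ℝ) < b - alphaH h a b := by linarith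
    rw [le_div_iff₀ hp] at hθ2
    have hbm : b - m ≤ b - alphaH h a b := by rw [hmeq]; linarith
    linarith [mul_le_mul_of_nonneg_left hbm hθnn]
  set θ := thetaLow h a b with hθdef
  clear_value θ
  -- I₁ and I₂
  have hIOam : IntegrableOn h (uIcc a m) := hh.mono_set (by rw [uIcc_of_le ham.le]; exact Icc_subset_Icc le_rfl hmb.le)
  have hIOmb : IntegrableOn h (uIcc m b) := hh.mono_set (by rw [uIcc_of_le hmb.le]; exact Icc_subset_Icc ham.le le_rfl)
  have hI1cont : ContinuousOn (fun y => ψ (∫ s in y..m, h s)) (uIcc a m) :=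
    hψcont.comp_continuousOn (intervalIntegral.continuousOn_primitive_interval_left hIOam)
  have hI2cont : ContinuousOn (fun y => ψ (∫ s in m..y, h s)) (uIcc m b) :=
    hψcont.comp_continuousOn (intervalIntegral.continuousOn_primitive_interval hIOmb)
  have hI1int : IntervalIntegrable (fun y => ψ (∫ s in y..m, h s)) volume a m :=
    hI1cont.intervalIntegrable
  have hI2int : IntervalIntegrable (fun y => ψ (∫ s in m..y, h s)) volume m b :=
    hI2cont.intervalIntegrable
  have hI1nn : 0 ≤ ∫ y in a..m, ψ (∫ s in y..m, h s) := by
    apply intervalIntegral.integral_nonneg ham.le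
    intro y hy
    rw [← hψ0]
    exact hψmono (hHnn y m ⟨hy.1, hy.2.trans hmb.le⟩ hmI hy.2)
  have hI2nn : 0 ≤ ∫ y in m..b, ψ (∫ s in m..y, h s) := by
    apply intervalIntegral.integral_nonneg hmb.le
    intro y hy
    rw [← hψ0]
    exact hψmono (hHnn m y hmI ⟨ham.le.trans hy.1, hy.2⟩ hy.1)
  -- v m dominates min I₁ I₂
  have hvm : min (∫ y in a..m, ψ (∫ s in y..m, h s)) (∫ y in m..b, ψ (∫ s in m..y, h s)) ≤ v m := by
    rcases le_total (∫ s in a..m, h s) (φ (v' a)) with hcs | hcs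
    · -- v m ≥ I₁
      have key : ∀ y ∈ Icc a m, ψ (∫ s in y..m, h s) ≤ v' y := by
        intro y hy
        have hyI : y ∈ Icc a b := ⟨hy.1, hy.2.trans hmb.le⟩
        have h1 := heq y hyI
        have h3 := hadd a y m haI hyI hmI
        have h2 : (∫ s in y..m, h s) ≤ φ (v' y) := by linarith
        calc ψ (∫ s in y..m, h s) ≤ ψ (φ (v' y)) := hψmono h2
          _ = v' y := hψφ _
      have h4 : (∫ y in a..m, ψ (∫ s in y..m, h s)) ≤ ∫ y in a..m, v' y :=
        intervalIntegral.integral_mono_on ham.le hI1int (hv'int haI hmI) key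
      have h5 : (∫ y in a..m, v' y) = v m := by
        rw [hFTC a m haI hmI ham.le, hva, sub_zero]
      exact (min_le_left _ _).trans (by linarith)
    · -- v m ≥ I₂
      have key : ∀ y ∈ Icc m b, ψ (∫ s in m..y, h s) ≤ -v' y := by
        intro y hy
        have hyI : y ∈ Icc a b := ⟨ham.le.trans hy.1, hy.2⟩
        have h1 := heq y hyI
        have h3 := hadd a m y haI hmI hyI
        have h2 : (∫ s in m..y, h s) ≤ φ (-v' y) := by rw [hodd]; linarith
        calc ψ (∫ s in m..y, h s) ≤ ψ (φ (-v' y)) := hψmono h2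
          _ = -v' y := hψφ _
      have h4 : (∫ y in m..b, ψ (∫ s in m..y, h s)) ≤ ∫ y in m..b, -v' y :=
        intervalIntegral.integral_mono_on hmb.le hI2int ((hv'int hmI hbI).neg) key
      have h5 : (∫ y in m..b, -v' y) = v m := by
        rw [intervalIntegral.integral_neg, hFTC m b hmI hbI hmb.le, hvb]
        ring
      exact (min_le_right _ _).trans (by linarith)
  have hminn : 0 ≤ min (∫ y in a..m, ψ (∫ s in y..m, h s)) (∫ y in m..b, ψ (∫ s in m..y, h s)) :=
    le_min hI1nn hI2nn
  -- main pointwise bounds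
  intro x hx
  have hxa : (0:ℝ) ≤ x - a := by linarith [hx.1]
  have hxb : (0:ℝ) ≤ b - x := by linarith [hx.2]
  constructor
  · -- lower bound
    set M := min (∫ y in a..m, ψ (∫ s in y..m, h s)) (∫ y in m..b, ψ (∫ s in m..y, h s)) with hM
    clear_value M
    have hθM : 0 ≤ θ * M := mul_nonneg hθnn hminn
    rcases le_total x m with hxm | hmx
    · -- x ∈ [a, m]
      have hA : (x - a) * v' x ≤ v x := by
        have h1 : (∫ y in a..x, v' x) ≤ ∫ y in a..x, v' y :=
          intervalIntegral.integral_mono_on hx.1 intervalIntegrable_const (hv'int haI hx)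
            (fun y hy => hv'dec y x ⟨hy.1, le_trans hy.2 (le_trans hxm hmb.le)⟩ hx hy.2)
        rw [intervalIntegral.integral_const, smul_eq_mul] at h1
        rw [hFTC a x haI hx hx.1, hva, sub_zero] at h1
        exact h1
      have hB : v m - v x ≤ (m - x) * v' x := by
        have h1 : (∫ y in x..m, v' y) ≤ ∫ y in x..m, v' x :=
          intervalIntegral.integral_mono_on hxm (hv'int hx hmI) intervalIntegrable_const
            (fun y hy => hv'dec x y hx ⟨hx.1.trans hy.1, hy.2.trans hmb.le⟩ hy.1)
        rw [intervalIntegral.integral_const, smul_eq_mul] at h1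
        rw [hFTC x m hx hmI hxm] at h1
        exact h1
      have hchain : (x - a) * v m ≤ (m - a) * v x := by
        linarith [mul_le_mul_of_nonneg_left hB hxa,
          mul_le_mul_of_nonneg_left hA (by linarith : (0:ℝ) ≤ m - x)]
      have hgoal2 : θ * M * (x - a) ≤ v x := by
        have hmain : θ * M * (x - a) * (m - a) ≤ v x * (m - a) := by
          linarith [mul_le_mul_of_nonneg_right hθma (mul_nonneg hminn hxa),
            mul_le_mul_of_nonneg_right hvm hxa, hchain]
        exact le_of_mul_le_mul_right hmain (by linarith)
      calc θ * M * deltaOmega a b x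
          ≤ θ * M * (x - a) := mul_le_mul_of_nonneg_left (min_le_left _ _) hθM
        _ ≤ v x := hgoal2
    · -- x ∈ [m, b]
      have hA : (x - m) * v' x ≤ v x - v m := by
        have h1 : (∫ y in m..x, v' x) ≤ ∫ y in m..x, v' y :=
          intervalIntegral.integral_mono_on hmx intervalIntegrable_const (hv'int hmI hx)
            (fun y hy => hv'dec y x ⟨ham.le.trans hy.1, hy.2.trans hx.2⟩ hx hy.2)
        rw [intervalIntegral.integral_const, smul_eq_mul] at h1
        rw [hFTC m x hmI hx hmx] at h1
        exact h1
      have hB : -v x ≤ (b - x) * v' x := by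
        have h1 : (∫ y in x..b, v' y) ≤ ∫ y in x..b, v' x :=
          intervalIntegral.integral_mono_on hx.2 (hv'int hx hbI) intervalIntegrable_const
            (fun y hy => hv'dec x y hx ⟨hx.1.trans hy.1, hy.2⟩ hy.1)
        rw [intervalIntegral.integral_const, smul_eq_mul] at h1
        rw [hFTC x b hx hbI hx.2, hvb, zero_sub] at h1
        exact h1
      have hchain : (b - x) * v m ≤ (b - m) * v x := by
        linarith [mul_le_mul_of_nonneg_left hB (by linarith : (0:ℝ) ≤ x - m),
          mul_le_mul_of_nonneg_left hA hxb]
      have hgoal2 : θ * M * (b - x) ≤ v x := by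
        have hmain : θ * M * (b - x) * (b - m) ≤ v x * (b - m) := by
          linarith [mul_le_mul_of_nonneg_right hθbm (mul_nonneg hminn hxb),
            mul_le_mul_of_nonneg_right hvm hxb, hchain]
        exact le_of_mul_le_mul_right hmain (by linarith)
      calc θ * M * deltaOmega a b x
          ≤ θ * M * (b - x) := mul_le_mul_of_nonneg_left (min_le_right _ _) hθM
        _ ≤ v x := hgoal2
  · -- upper bound
    have h1 : v x ≤ (x - a) * v' a := by
      have h2 : (∫ y in a..x, v' y) ≤ ∫ y in a..x, v' a :=
        intervalIntegral.integral_mono_on hx.1 (hv'int haI hx) intervalIntegrable_const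
          (fun y hy => hv'dec a y haI ⟨hy.1, hy.2.trans hx.2⟩ hy.1)
      rw [intervalIntegral.integral_const, smul_eq_mul] at h2
      rw [hFTC a x haI hx hx.1, hva, sub_zero] at h2
      exact h2
    have h2 : v x ≤ (b - x) * (-v' b) := by
      have h3 : (∫ y in x..b, v' b) ≤ ∫ y in x..b, v' y :=
        intervalIntegral.integral_mono_on hx.2 intervalIntegrable_const (hv'int hx hbI)
          (fun y hy => hv'dec y b ⟨hx.1.trans hy.1, hy.2⟩ hbI hy.2)
      rw [intervalIntegral.integral_const, smul_eq_mul] at h3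
      rw [hFTC x b hx hbI hx.2, hvb, zero_sub] at h3
      linarith
    rcases le_total (x - a) (b - x) with hdd | hdd
    · have hδ : deltaOmega a b x = x - a := min_eq_left hdd
      rw [hδ]
      linarith [mul_le_mul_of_nonneg_left hvaK hxa]
    · have hδ : deltaOmega a b x = b - x := min_eq_right hdd
      rw [hδ]
      linarith [mul_le_mul_of_nonneg_left hvbK hxb]
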